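/- Let C1 be a t-dimensional linear subspace of F_2^n and let l ≥ 0 be an integer with t + l ≤ n. Let μ be a probability distribution on the set of (t+l)-dimensional linear subspaces C2 of F_2^n containing C1 such that for every x ∈ F_2^n \ C1 the μ-probability of the event {C2 : x ∈ C2} equals (2^{l+t} − 2^t)/(2^n − 2^t). For each subspace C2 in the support of μ let Γ_{C2} ⊆ F_2^n be a set containing, for each coset of C2 in F_2^n, exactly one element of minimal Hamming weight in that coset, and set Γ_{C2} + C1 := {γ + c : γ ∈ Γ_{C2}, c ∈ C1}. Then for every integer k with 0 ≤ k ≤ n/2 and every probability distribution P on F_2^n supported on {x ∈ F_2^n : |x| = k}, E_{C2∼μ}[1 − P(Γ_{C2} + C1)] ≤ 2^{n·h(k/n)}·2^{l+t−n}. -/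

import Mathlib

open scoped Classical

/-- Binary entropy with base-2 logarithm, with the convention `0 * log 0 = 0`. -/
noncomputable def h2 (x : ℝ) : ℝ := -(x * Real.logb 2 x) - (1 - x) * Real.logb 2 (1 - x)

lemma aux_zmod2_cases (a : ZMod 2) : a = 0 ∨ a = 1 := by
  fin_cases a
  · exact Or.inl rfl
  · exact Or.inr rfl

open Finset in
lemma aux_ball_card (n k : ℕ) :
    ((univ : Finset (Fin n → ZMod 2)).filter (fun w => hammingNorm w ≤ k)).card
      ≤ ∑ i ∈ range (k+1), n.choose i := by
  classical
  set f : (Fin n → ZMod 2) → Finset (Fin n) := fun w => univ.filter (fun i => w i ≠ 0) with hf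
  have hcard : ∀ w, (f w).card = hammingNorm w := fun w => rfl
  have h1 : ((univ : Finset (Fin n → ZMod 2)).filter (fun w => hammingNorm w ≤ k)).card
      ≤ ((range (k+1)).biUnion (fun i => powersetCard i (univ : Finset (Fin n)))).card := by
    apply Finset.card_le_card_of_injOn f
    · intro w hw
      simp only [Finset.mem_coe, mem_filter, mem_univ, true_and] at hw
      simp only [Finset.mem_coe, mem_biUnion, mem_range, Finset.mem_powersetCard_univ]
      exact ⟨(f w).card, by rw [hcard]; omega, rfl⟩
    · intro w _ w' _ h
      funext i
      have hmem : i ∈ f w ↔ i ∈ f w' := by rw [h]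
      simp only [hf, mem_filter, mem_univ, true_and] at hmem
      rcases aux_zmod2_cases (w i) with h0 | h0 <;> rcases aux_zmod2_cases (w' i) with h1 | h1 <;>
        rw [h0, h1] <;> rw [h0, h1] at hmem <;> simp at hmem
  refine h1.trans ?_
  refine (Finset.card_biUnion_le).trans ?_
  apply Finset.sum_le_sum
  intro i _
  simp [Finset.card_powersetCard]

open Finset in
lemma aux_sum_choose_le (n k : ℕ) (hk : 2 * k ≤ n) :
    (∑ i ∈ range (k+1), (n.choose i : ℝ)) ≤ 2 ^ ((n : ℝ) * h2 ((k : ℝ) / n)) := by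
  rcases Nat.eq_zero_or_pos k with rfl | hkpos
  · simp [h2, Real.logb]
  have hn : 0 < n := by omega
  have hkn : (k : ℝ) ≤ n := by exact_mod_cast (by omega : k ≤ n)
  set p : ℝ := (k : ℝ) / n with hp
  have hp0 : 0 < p := by positivity
  have hple : p ≤ 1/2 := by
    rw [hp, div_le_div_iff₀ (by positivity) (by norm_num)]
    have : (2:ℝ) * k ≤ n := by exact_mod_cast hk
    linarith
  have hq0 : 0 < 1 - p := by linarith
  have hpq : p ≤ 1 - p := by linarith
  have hterm : ∀ i ∈ range (k+1), p ^ k * (1 - p) ^ (n - k) ≤ p ^ i * (1 - p) ^ (n - i) := by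
    intro i hi
    rw [mem_range] at hi
    have hik : i ≤ k := by omega
    have h1 : p ^ k = p ^ i * p ^ (k - i) := by rw [← pow_add]; congr 1; omega
    have h2 : (1 - p) ^ (n - i) = (1 - p) ^ (k - i) * (1 - p) ^ (n - k) := by
      rw [← pow_add]; congr 1; omega
    rw [h1, h2]
    have : p ^ (k - i) ≤ (1 - p) ^ (k - i) := pow_le_pow_left₀ hp0.le hpq _
    calc p ^ i * p ^ (k-i) * (1-p) ^ (n-k) ≤ p ^ i * (1-p) ^ (k-i) * (1-p) ^ (n-k) := by
          apply mul_le_mul_of_nonneg_right _ (by positivity)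
          exact mul_le_mul_of_nonneg_left this (by positivity)
      _ = p ^ i * ((1-p) ^ (k-i) * (1-p) ^ (n-k)) := by ring
  have hbin : (∑ i ∈ range (k+1), (n.choose i : ℝ) * (p ^ i * (1 - p) ^ (n - i))) ≤ 1 := by
    have h1 : (∑ i ∈ range (n+1), p ^ i * (1 - p) ^ (n - i) * (n.choose i : ℝ)) = 1 := by
      rw [← add_pow]; simp
    calc (∑ i ∈ range (k+1), (n.choose i : ℝ) * (p ^ i * (1 - p) ^ (n - i)))
        = ∑ i ∈ range (k+1), p ^ i * (1 - p) ^ (n - i) * (n.choose i : ℝ) := by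
          apply Finset.sum_congr rfl; intros; ring
      _ ≤ ∑ i ∈ range (n+1), p ^ i * (1 - p) ^ (n - i) * (n.choose i : ℝ) := by
          apply Finset.sum_le_sum_of_subset_of_nonneg
          · exact Finset.range_subset_range.2 (by omega)
          · intros; positivity
      _ = 1 := h1
  have hkey : (2 : ℝ) ^ ((n : ℝ) * h2 p) = (p ^ k * (1 - p) ^ (n - k))⁻¹ := by
    have hnp : (n : ℝ) * p = k := by
      have hn0 : (n : ℝ) ≠ 0 := by positivity
      rw [hp]; field_simp
    have hnq : (n : ℝ) * (1 - p) = ((n - k : ℕ) : ℝ) := by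
      push_cast [Nat.cast_sub (by omega : k ≤ n)]
      rw [mul_sub, mul_one, hnp]
    have : (n : ℝ) * h2 p
        = -((k : ℝ) * Real.logb 2 p) + -(((n - k : ℕ) : ℝ) * Real.logb 2 (1 - p)) := by
      rw [h2]; rw [← hnp, ← hnq]; ring
    rw [this, Real.rpow_add (by norm_num), Real.rpow_neg (by norm_num),
      Real.rpow_neg (by norm_num)]
    rw [mul_comm ((k:ℝ)) _, mul_comm (((n-k:ℕ):ℝ)) _]
    rw [Real.rpow_mul (by norm_num), Real.rpow_mul (by norm_num)]
    rw [Real.rpow_logb (by norm_num) (by norm_num) hp0,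
      Real.rpow_logb (by norm_num) (by norm_num) hq0]
    rw [Real.rpow_natCast, Real.rpow_natCast, mul_inv]
  have hpos : 0 < p ^ k * (1 - p) ^ (n - k) := by positivity
  have hmul : (∑ i ∈ range (k+1), (n.choose i : ℝ)) * (p ^ k * (1 - p) ^ (n - k)) ≤ 1 := by
    rw [Finset.sum_mul]
    refine le_trans (Finset.sum_le_sum ?_) hbin
    intro i hi
    exact mul_le_mul_of_nonneg_left (hterm i hi) (Nat.cast_nonneg _)
  rw [hkey, ← one_div, le_div_iff₀ hpos]
  exact hmul

/-- Random-coding bound for minimum-Hamming-distance decoding for a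
distribution concentrated on words of Hamming weight `k ≤ n/2`: if the `(t+l)`-dimensional
code `C2 ⊇ C1` is chosen at random so that every `x ∉ C1` lies in `C2` with probability
`(2^{l+t}−2^t)/(2^n−2^t)`, and `Γ_{C2}` is a set of minimal-weight coset representatives
for `C2`, then `E[1 − P(Γ_{C2} + C1)] ≤ 2^{n·h(k/n)}·2^{l+t−n}`. -/
theorem stmt_1 (n t l : ℕ) (htl : t + l ≤ n)
    (C1 : Submodule (ZMod 2) (Fin n → ZMod 2))
    (hC1rk : Module.finrank (ZMod 2) C1 = t)
    (Ω : Type) [Fintype Ω] (μ : Ω → ℝ)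
    (hμ0 : ∀ ω, 0 ≤ μ ω) (hμ1 : ∑ ω, μ ω = 1)
    (C2 : Ω → Submodule (ZMod 2) (Fin n → ZMod 2))
    (hC2le : ∀ ω, μ ω ≠ 0 → C1 ≤ C2 ω)
    (hC2rk : ∀ ω, μ ω ≠ 0 → Module.finrank (ZMod 2) (C2 ω) = t + l)
    (hprob : ∀ x : Fin n → ZMod 2, x ∉ C1 →
      ∑ ω, (if x ∈ C2 ω then μ ω else 0) = ((2 : ℝ) ^ (l + t) - 2 ^ t) / (2 ^ n - 2 ^ t))
    (Γ : Ω → Finset (Fin n → ZMod 2))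
    (hΓuniq : ∀ ω, μ ω ≠ 0 → ∀ y : Fin n → ZMod 2, ∃! γ, γ ∈ Γ ω ∧ y - γ ∈ C2 ω)
    (hΓmin : ∀ ω, μ ω ≠ 0 → ∀ γ ∈ Γ ω, ∀ y : Fin n → ZMod 2, y - γ ∈ C2 ω →
      hammingNorm γ ≤ hammingNorm y)
    (k : ℕ) (hk : 2 * k ≤ n)
    (P : (Fin n → ZMod 2) → ℝ) (hP0 : ∀ x, 0 ≤ P x) (hP1 : ∑ x, P x = 1)
    (hPsupp : ∀ x, P x ≠ 0 → hammingNorm x = k) :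
    ∑ ω, μ ω *
        (1 - ∑ y ∈ Finset.univ.filter
            (fun y : Fin n → ZMod 2 => ∃ γ ∈ Γ ω, ∃ c ∈ C1, y = γ + c), P y)
      ≤ 2 ^ ((n : ℝ) * h2 ((k : ℝ) / n)) * ((2 : ℝ) ^ (l + t) / 2 ^ n) := by
  classical
  set S : Ω → Finset (Fin n → ZMod 2) :=
    fun ω => Finset.univ.filter (fun y => ∃ γ ∈ Γ ω, ∃ c ∈ C1, y = γ + c) with hS
  set pr : ℝ := ((2 : ℝ) ^ (l + t) - 2 ^ t) / ((2 : ℝ) ^ n - 2 ^ t) with hpr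
  set M : ℝ := 2 ^ ((n : ℝ) * h2 ((k : ℝ) / n)) with hM
  have hM0 : 0 ≤ M := le_of_lt (Real.rpow_pos_of_pos (by norm_num) _)
  have hpr0 : 0 ≤ pr := by
    apply div_nonneg
    · have : (2:ℝ) ^ t ≤ 2 ^ (l + t) := pow_le_pow_right₀ (by norm_num) (by omega)
      linarith
    · have : (2:ℝ) ^ t ≤ 2 ^ n := pow_le_pow_right₀ (by norm_num) (by omega)
      linarith
  have hprle : pr ≤ (2 : ℝ) ^ (l + t) / 2 ^ n := by
    rcases eq_or_lt_of_le (show t ≤ n by omega) with htn | htn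
    · have hl0 : l = 0 := by omega
      have : pr = 0 := by
        rw [hpr, hl0, zero_add, htn, sub_self, zero_div]
      rw [this]
      positivity
    · have hd : (0:ℝ) < 2 ^ n - 2 ^ t :=
        sub_pos.2 (pow_lt_pow_right₀ (by norm_num) htn)
      rw [hpr, div_le_div_iff₀ hd (by positivity)]
      have h1 : (2:ℝ) ^ (l + t) ≤ 2 ^ n := pow_le_pow_right₀ (by norm_num) (by omega)
      have h2 : (0:ℝ) < 2 ^ t := by positivity
      nlinarith
  -- rewrite the LHS
  have hrw : ∀ ω, 1 - ∑ y ∈ S ω, P y = ∑ y ∈ (S ω)ᶜ, P y := by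
    intro ω
    have h := Finset.sum_compl_add_sum (S ω) P
    rw [hP1] at h
    linarith
  have hbound : ∀ y : Fin n → ZMod 2, P y ≠ 0 →
      (∑ ω, if y ∈ (S ω)ᶜ then μ ω else 0) ≤ M * ((2 : ℝ) ^ (l + t) / 2 ^ n) := by
    intro y hPy
    have hwy : hammingNorm y = k := hPsupp y hPy
    set B : Finset (Fin n → ZMod 2) :=
      Finset.univ.filter (fun z => z ∉ C1 ∧ hammingNorm (y - z) ≤ k) with hB
    have hstep : ∀ ω, (if y ∈ (S ω)ᶜ then μ ω else 0)
        ≤ ∑ z ∈ B, (if z ∈ C2 ω then μ ω else 0) := by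
      intro ω
      have hnn : ∀ z ∈ B, (0:ℝ) ≤ if z ∈ C2 ω then μ ω else 0 := by
        intro z _
        split
        · exact hμ0 ω
        · exact le_refl 0
      have hsum0 : 0 ≤ ∑ z ∈ B, (if z ∈ C2 ω then μ ω else 0) := Finset.sum_nonneg hnn
      split_ifs with hy
      · by_cases hμ : μ ω = 0
        · simp [hμ]
        · have hyS : y ∉ S ω := Finset.mem_compl.1 hy
          obtain ⟨γ, ⟨hγΓ, hγC⟩, -⟩ := hΓuniq ω hμ y
          have hz1 : y - γ ∉ C1 := by
            intro hzc
            apply hyS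
            rw [hS]
            simp only [Finset.mem_filter, Finset.mem_univ, true_and]
            exact ⟨γ, hγΓ, y - γ, hzc, by ring⟩
          have hz2 : hammingNorm (y - (y - γ)) ≤ k := by
            have hyy : y - (y - γ) = γ := by ring
            rw [hyy]
            exact hwy ▸ hΓmin ω hμ γ hγΓ y hγC
          have hzB : y - γ ∈ B := by
            rw [hB]
            simp only [Finset.mem_filter, Finset.mem_univ, true_and]
            exact ⟨hz1, hz2⟩
          have hle := Finset.single_le_sum hnn hzB
          rw [if_pos hγC] at hle
          exact hle
      · exact hsum0
    calc (∑ ω, if y ∈ (S ω)ᶜ then μ ω else 0)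
        ≤ ∑ ω, ∑ z ∈ B, (if z ∈ C2 ω then μ ω else 0) :=
          Finset.sum_le_sum (fun ω _ => hstep ω)
      _ = ∑ z ∈ B, ∑ ω, (if z ∈ C2 ω then μ ω else 0) := Finset.sum_comm
      _ = ∑ z ∈ B, pr := by
          apply Finset.sum_congr rfl
          intro z hz
          rw [hB] at hz
          simp only [Finset.mem_filter, Finset.mem_univ, true_and] at hz
          exact hprob z hz.1
      _ = B.card * pr := by rw [Finset.sum_const, nsmul_eq_mul]
      _ ≤ M * ((2 : ℝ) ^ (l + t) / 2 ^ n) := by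
          apply mul_le_mul _ hprle hpr0 hM0
          -- card bound
          have h1 : B.card ≤ (Finset.univ.filter
              (fun z : Fin n → ZMod 2 => hammingNorm (y - z) ≤ k)).card := by
            apply Finset.card_le_card
            intro z hz
            simp only [hB, Finset.mem_filter, Finset.mem_univ, true_and] at hz ⊢
            exact hz.2
          have h2 : (Finset.univ.filter
              (fun z : Fin n → ZMod 2 => hammingNorm (y - z) ≤ k)).card
              = (Finset.univ.filter
              (fun w : Fin n → ZMod 2 => hammingNorm w ≤ k)).card := by
            apply Finset.card_bij' (fun z _ => y - z) (fun w _ => y - w)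
            · intro z hz
              simp only [Finset.mem_filter, Finset.mem_univ, true_and] at hz ⊢
              exact hz
            · intro w hw
              simp only [Finset.mem_filter, Finset.mem_univ, true_and] at hw ⊢
              have : y - (y - w) = w := by ring
              rw [this]
              exact hw
            · intro z _; ring
            · intro w _; ring
          have h3 := aux_ball_card n k
          have h4 := aux_sum_choose_le n k hk
          have : (B.card : ℝ) ≤ ∑ i ∈ Finset.range (k+1), (n.choose i : ℝ) := by
            have : B.card ≤ ∑ i ∈ Finset.range (k+1), n.choose i := by
              omega
            exact_mod_cast this
          exact this.trans h4
  calc ∑ ω, μ ω * (1 - ∑ y ∈ S ω, P y)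
      = ∑ ω, ∑ y, (if y ∈ (S ω)ᶜ then μ ω * P y else 0) := by
        apply Finset.sum_congr rfl
        intro ω _
        rw [hrw, Finset.mul_sum, Finset.sum_ite_mem, Finset.univ_inter]
    _ = ∑ y, ∑ ω, (if y ∈ (S ω)ᶜ then μ ω * P y else 0) := Finset.sum_comm
    _ = ∑ y, P y * (∑ ω, if y ∈ (S ω)ᶜ then μ ω else 0) := by
        apply Finset.sum_congr rfl
        intro y _
        rw [Finset.mul_sum]
        apply Finset.sum_congr rfl
        intro ω _
        split <;> ring
    _ ≤ ∑ y, P y * (M * ((2 : ℝ) ^ (l + t) / 2 ^ n)) := by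
        apply Finset.sum_le_sum
        intro y _
        by_cases hPy : P y = 0
        · rw [hPy]; simp
        · exact mul_le_mul_of_nonneg_left (hbound y hPy) (hP0 y)
    _ = M * ((2 : ℝ) ^ (l + t) / 2 ^ n) := by
        rw [← Finset.sum_mul, hP1, one_mul]
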